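/- Let G = (V,E) be a finite simple graph without isolated vertices. Then |V| equals the minimum cardinality of a (1/2)-dominating set of G plus the maximum cardinality of a (1/2)-independent set of G. -/
import Mathlib


open Finset

lemma compl_card_aux {V : Type*} [Fintype V] [DecidableEq V]
    (G : SimpleGraph V) [DecidableRel G.Adj] (v : V) (X : Finset V) :
    (G.neighborFinset v ∩ X).card + (G.neighborFinset v ∩ Xᶜ).card
      = (G.neighborFinset v).card := by
  rw [← Finset.sdiff_eq_inter_compl, Finset.card_inter_add_card_sdiff]

/-- (Gallai-type identity.) For a finite simple graph `G` without isolated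
vertices, the number of vertices equals the minimum cardinality `a` of a `(1/2)`-dominating
set plus the maximum cardinality `b` of a `(1/2)`-independent set. -/
theorem stmt_12 {V : Type*} [Fintype V] [DecidableEq V]
    (G : SimpleGraph V) [DecidableRel G.Adj] (hiso : ∀ v : V, 0 < G.degree v) (a b : ℕ)
    (ha : IsLeast {n : ℕ | ∃ X : Finset V,
      (∀ v ∉ X, (1 / 2 : ℚ) * ((G.neighborFinset v).card : ℚ) ≤
        ((G.neighborFinset v ∩ X).card : ℚ)) ∧ X.card = n} a)
    (hb : IsGreatest {n : ℕ | ∃ X : Finset V,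
      (∀ v ∈ X, ((G.neighborFinset v ∩ X).card : ℚ) ≤
        (1 / 2 : ℚ) * ((G.neighborFinset v).card : ℚ)) ∧ X.card = n} b) :
    Fintype.card V = a + b := by
  obtain ⟨⟨X, hX, hXc⟩, hamin⟩ := ha
  obtain ⟨⟨Y, hY, hYc⟩, hbmax⟩ := hb
  -- Xᶜ is (1/2)-independent
  have h1 : Fintype.card V - a ≤ b := by
    apply hbmax
    refine ⟨Xᶜ, ?_, ?_⟩
    · intro v hv
      have hvX : v ∉ X := by simpa using hv
      have hd := hX v hvX
      have hcard := compl_card_aux G v X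
      have hcard' : ((G.neighborFinset v ∩ X).card : ℚ)
          + ((G.neighborFinset v ∩ Xᶜ).card : ℚ) = ((G.neighborFinset v).card : ℚ) := by
        exact_mod_cast congrArg (Nat.cast : ℕ → ℚ) hcard
      linarith
    · rw [Finset.card_compl, hXc]
  -- Yᶜ is (1/2)-dominating
  have h2 : a ≤ Fintype.card V - b := by
    have := hamin ⟨Yᶜ, by
      constructor
      · intro v hv
        have hvY : v ∈ Y := by simpa using hv
        have hd := hY v hvY
        have hcard := compl_card_aux G v Y
        have hcard' : ((G.neighborFinset v ∩ Y).card : ℚ)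
            + ((G.neighborFinset v ∩ Yᶜ).card : ℚ) = ((G.neighborFinset v).card : ℚ) := by
          exact_mod_cast congrArg (Nat.cast : ℕ → ℚ) hcard
        linarith
      · rw [Finset.card_compl, hYc]⟩
    exact this
  have haV : a ≤ Fintype.card V := hXc ▸ Finset.card_le_univ X
  have hbV : b ≤ Fintype.card V := hYc ▸ Finset.card_le_univ Y
  omega
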